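/- Let f : (0,1) → (0,1) be the projective unsorted Farey map, f(x) = x/(1−x) for 0 < x ≤ 1/2 and f(x) = 2 − 1/x for 1/2 < x < 1. Let μ be the measure on ℝ obtained by restricting Lebesgue measure to the interval (0,1) and taking the density x ↦ 1/(x(1−x)). Then the pushforward of μ under f equals μ (i.e. μ is f-invariant). -/

import Mathlib

open MeasureTheory Set

/-- The projective unsorted Farey map on `(0,1)`:
`f(x) = x/(1-x)` for `0 < x ≤ 1/2` and `f(x) = 2 - 1/x` for `1/2 < x < 1`. -/
noncomputable def fareyProj : ℝ → ℝ := fun x =>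
  if x ≤ 1 / 2 then x / (1 - x) else 2 - 1 / x

/-- Lebesgue measure restricted to `(0,1)` with density `x ↦ 1/(x(1-x))`. -/
noncomputable def fareyMeasure : Measure ℝ :=
  (volume.restrict (Ioo (0:ℝ) 1)).withDensity fun x => ENNReal.ofReal (1 / (x * (1 - x)))

/-- One-dimensional change of variables for the Lebesgue integral. -/
lemma lintegral_image_1d {s : Set ℝ} {f f' : ℝ → ℝ} (hs : MeasurableSet s)
    (hf' : ∀ x ∈ s, HasDerivWithinAt f (f' x) s x) (hf : InjOn f s) (g : ℝ → ENNReal) :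
    ∫⁻ x in f '' s, g x = ∫⁻ x in s, ENNReal.ofReal |f' x| * g (f x) := by
  simpa only [ContinuousLinearMap.det_toSpanSingleton] using
    lintegral_image_eq_lintegral_abs_det_fderiv_mul volume hs
      (fun x hx => (hf' x hx).hasFDerivWithinAt) hf g

lemma measurable_fareyProj : Measurable fareyProj := by
  unfold fareyProj
  exact Measurable.ite (measurableSet_le measurable_id measurable_const)
    (measurable_id.div (measurable_const.sub measurable_id))
    (measurable_const.sub (measurable_const.div measurable_id))

set_option maxHeartbeats 1000000 in
/-- The measure with density `1/(x(1-x))` on `(0,1)` is invariant under the projective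
unsorted Farey map. -/
theorem stmt_1 : fareyMeasure.map fareyProj = fareyMeasure := by
  have hfm := measurable_fareyProj
  ext s hs
  rw [Measure.map_apply hfm hs]
  have key : ∀ A : Set ℝ, MeasurableSet A →
      fareyMeasure A = ∫⁻ x in A ∩ Ioo 0 1, ENNReal.ofReal (1 / (x * (1 - x))) := by
    intro A hA
    rw [fareyMeasure, withDensity_apply _ hA, Measure.restrict_restrict hA]
  rw [key _ (hfm hs), key _ hs]
  set t : Set ℝ := s ∩ Ioo 0 1 with ht_def
  have ht : MeasurableSet t := hs.inter measurableSet_Ioo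
  set h₁ : ℝ → ℝ := fun y => y / (1 + y) with hh₁
  set h₂ : ℝ → ℝ := fun y => (2 - y)⁻¹ with hh₂
  -- branch set equalities
  have hE₁ : fareyProj ⁻¹' s ∩ Ioo 0 (1/2) = h₁ '' t := by
    ext x
    constructor
    · rintro ⟨hxs, hx0, hx2⟩
      have hx1 : x < 1 := by linarith
      have hfx : fareyProj x = x / (1 - x) := by
        show (if x ≤ 1/2 then x / (1 - x) else 2 - 1/x) = x / (1 - x)
        rw [if_pos (le_of_lt hx2)]
      refine ⟨x / (1 - x), ⟨?_, ?_, ?_⟩, ?_⟩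
      · rwa [← hfx]
      · exact div_pos hx0 (by linarith)
      · rw [div_lt_one (by linarith)]; linarith
      · have h1x : (1:ℝ) - x ≠ 0 := by linarith
        show (x / (1 - x)) / (1 + x / (1 - x)) = x
        field_simp
        ring
    · rintro ⟨y, ⟨hys, hy0, hy1⟩, rfl⟩
      have h1y : (0:ℝ) < 1 + y := by linarith
      have hx0 : 0 < h₁ y := div_pos hy0 h1y
      have hx2 : h₁ y < 1/2 := by
        rw [hh₁]
        show y / (1 + y) < 1/2
        rw [div_lt_iff₀ h1y]
        linarith
      have hfx : fareyProj (h₁ y) = y := by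
        have h1 : 1 - h₁ y = 1 / (1 + y) := by
          rw [hh₁]
          show 1 - y / (1 + y) = 1 / (1 + y)
          field_simp
          ring
        show (if h₁ y ≤ 1/2 then h₁ y / (1 - h₁ y) else 2 - 1/(h₁ y)) = y
        rw [if_pos (le_of_lt hx2), h1, hh₁]
        show (y / (1 + y)) / (1 / (1 + y)) = y
        field_simp
      exact ⟨by rw [mem_preimage, hfx]; exact hys, hx0, hx2⟩
  have hE₂ : fareyProj ⁻¹' s ∩ Ioo (1/2) 1 = h₂ '' t := by
    ext x
    constructor
    · rintro ⟨hxs, hx2, hx1⟩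
      have hx0 : (0:ℝ) < x := by linarith
      have hfx : fareyProj x = 2 - 1/x := by
        show (if x ≤ 1/2 then x / (1 - x) else 2 - 1/x) = 2 - 1/x
        rw [if_neg (not_le.mpr hx2)]
      refine ⟨2 - 1/x, ⟨?_, ?_, ?_⟩, ?_⟩
      · rwa [← hfx]
      · have : 1/x < 2 := by rw [div_lt_iff₀ hx0]; linarith
        linarith
      · have : 1 < 1/x := by rw [lt_div_iff₀ hx0]; linarith
        linarith
      · show (2 - (2 - 1/x))⁻¹ = x
        have h2 : (2:ℝ) - (2 - 1/x) = 1/x := by ring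
        rw [h2]
        field_simp
    · rintro ⟨y, ⟨hys, hy0, hy1⟩, rfl⟩
      have h2y : (0:ℝ) < 2 - y := by linarith
      have hx2 : 1/2 < h₂ y := by
        rw [hh₂]
        show 1/2 < (2 - y)⁻¹
        rw [lt_inv_comm₀ (by norm_num) h2y]
        linarith
      have hx1 : h₂ y < 1 := by
        rw [hh₂]
        show (2 - y)⁻¹ < 1
        rw [inv_lt_one₀ h2y]
        linarith
      have hfx : fareyProj (h₂ y) = y := by
        show (if h₂ y ≤ 1/2 then h₂ y / (1 - h₂ y) else 2 - 1/(h₂ y)) = y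
        rw [if_neg (not_le.mpr hx2), hh₂]
        show 2 - 1 / (2 - y)⁻¹ = y
        rw [one_div, inv_inv]
        ring
      exact ⟨by rw [mem_preimage, hfx]; exact hys, hx2, hx1⟩
  have hsub1 : h₁ '' t ⊆ Ioo 0 (1/2) := by rw [← hE₁]; exact inter_subset_right
  have hsub2 : h₂ '' t ⊆ Ioo (1/2) 1 := by rw [← hE₂]; exact inter_subset_right
  -- a.e. decomposition of the preimage within (0,1)
  have hUE : h₁ '' t ∪ h₂ '' t ⊆ fareyProj ⁻¹' s ∩ Ioo 0 1 := by
    rintro x (hx | hx)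
    · have h := hsub1 hx
      rw [← hE₁] at hx
      exact ⟨hx.1, h.1, by linarith [h.2]⟩
    · have h := hsub2 hx
      rw [← hE₂] at hx
      exact ⟨hx.1, by linarith [h.1], h.2⟩
  have hEU : (fareyProj ⁻¹' s ∩ Ioo 0 1) \ (h₁ '' t ∪ h₂ '' t) ⊆ {(1:ℝ)/2} := by
    rintro x ⟨⟨hxs, hx0, hx1⟩, hxu⟩
    rcases lt_trichotomy x (1/2) with h | h | h
    · exact absurd (Or.inl (hE₁ ▸ ⟨hxs, hx0, h⟩)) hxu
    · exact h
    · exact absurd (Or.inr (hE₂ ▸ ⟨hxs, h, hx1⟩)) hxu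
  have hae : (fareyProj ⁻¹' s ∩ Ioo 0 1 : Set ℝ) =ᵐ[volume] ((h₁ '' t ∪ h₂ '' t : Set ℝ)) := by
    rw [ae_eq_set]
    refine ⟨measure_mono_null hEU (measure_singleton _), ?_⟩
    rw [diff_eq_empty.mpr hUE]
    simp
  rw [setLIntegral_congr hae]
  have hm2 : MeasurableSet (h₂ '' t) := by
    rw [← hE₂]; exact (hfm hs).inter measurableSet_Ioo
  have hdisj : Disjoint (h₁ '' t) (h₂ '' t) := by
    rw [disjoint_left]
    intro x h1 h2
    exact absurd (hsub2 h2).1 (not_lt.mpr (le_of_lt (hsub1 h1).2))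
  rw [lintegral_union hm2 hdisj]
  -- facts about points of t
  have hyfacts : ∀ y ∈ t, 0 < y ∧ y < 1 := fun y hy => ⟨hy.2.1, hy.2.2⟩
  -- change of variables, branch 1
  have hderiv₁ : ∀ y ∈ t, HasDerivWithinAt h₁ (1/(1+y)^2) t y := by
    intro y hy
    have h1y : (1:ℝ) + y ≠ 0 := by
      have := (hyfacts y hy).1; linarith
    have h := ((hasDerivAt_id y).div (((hasDerivAt_const y (1:ℝ))).add (hasDerivAt_id y)) h1y)
    refine h.hasDerivWithinAt.congr_deriv ?_
    simp only [Pi.add_apply, Pi.sub_apply, id]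
    ring
  have hinj₁ : InjOn h₁ t := by
    intro y hy z hz h
    have hy0 := (hyfacts y hy).1
    have hz0 := (hyfacts z hz).1
    have h1y : (0:ℝ) < 1 + y := by linarith
    have h1z : (0:ℝ) < 1 + z := by linarith
    rw [hh₁] at h
    simp only at h
    rw [div_eq_div_iff h1y.ne' h1z.ne'] at h
    nlinarith [h]
  have hderiv₂ : ∀ y ∈ t, HasDerivWithinAt h₂ (1/(2-y)^2) t y := by
    intro y hy
    have h2y : (2:ℝ) - y ≠ 0 := by
      have := (hyfacts y hy).2; linarith
    have h := (((hasDerivAt_const y (2:ℝ))).sub (hasDerivAt_id y)).inv h2y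
    refine h.hasDerivWithinAt.congr_deriv ?_
    simp only [Pi.add_apply, Pi.sub_apply, id]
    ring
  have hinj₂ : InjOn h₂ t := by
    intro y hy z hz h
    have := inv_injective h
    linarith [this]
  rw [lintegral_image_1d ht hderiv₁ hinj₁, lintegral_image_1d ht hderiv₂ hinj₂]
  -- simplify the two integrands
  have e1 : ∫⁻ y in t, ENNReal.ofReal |1/(1+y)^2| *
      ENNReal.ofReal (1 / (h₁ y * (1 - h₁ y))) = ∫⁻ y in t, ENNReal.ofReal (1/y) := by
    refine setLIntegral_congr_fun ht (fun y hy => ?_)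
    obtain ⟨hy0, hy1⟩ := hyfacts y hy
    have h1y : (0:ℝ) < 1 + y := by linarith
    have h1yne : (1:ℝ) + y ≠ 0 := h1y.ne'
    have hyne : y ≠ 0 := hy0.ne'
    have hprod : h₁ y * (1 - h₁ y) = y / (1+y)^2 := by
      rw [hh₁]
      show y / (1 + y) * (1 - y / (1 + y)) = y / (1+y)^2
      field_simp
      ring
    rw [abs_of_nonneg (by positivity), hprod,
      ← ENNReal.ofReal_mul (by positivity)]
    congr 1
    field_simp
  have e2 : ∫⁻ y in t, ENNReal.ofReal |1/(2-y)^2| *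
      ENNReal.ofReal (1 / (h₂ y * (1 - h₂ y))) = ∫⁻ y in t, ENNReal.ofReal (1/(1-y)) := by
    refine setLIntegral_congr_fun ht (fun y hy => ?_)
    obtain ⟨hy0, hy1⟩ := hyfacts y hy
    have h2y : (0:ℝ) < 2 - y := by linarith
    have h2yne : (2:ℝ) - y ≠ 0 := h2y.ne'
    have h1yne : (1:ℝ) - y ≠ 0 := by intro h; linarith
    have hprod : h₂ y * (1 - h₂ y) = (1-y) / (2-y)^2 := by
      rw [hh₂]
      show (2 - y)⁻¹ * (1 - (2 - y)⁻¹) = (1-y) / (2-y)^2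
      field_simp
      ring
    rw [abs_of_nonneg (by positivity), hprod,
      ← ENNReal.ofReal_mul (by positivity)]
    congr 1
    field_simp
  rw [e1, e2, ← lintegral_add_left (f := fun y : ℝ => ENNReal.ofReal (1/y)) ((measurable_const.div measurable_id).ennreal_ofReal)]
  refine setLIntegral_congr_fun ht (fun y hy => ?_)
  obtain ⟨hy0, hy1⟩ := hyfacts y hy
  have h1y : (0:ℝ) < 1 - y := by linarith
  rw [← ENNReal.ofReal_add (by positivity) (by positivity)]
  congr 1
  field_simp
  ring
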